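/- arXiv:0805.2821 — 5 statements merged into one kernel-verified Lean document; each statement's English description precedes it below -/
import Mathlib

section
/- Let H be a complex Hilbert space and let T₁, T₂ be bounded self-adjoint operators on H with 0 ≤ T₂ ≤ T₁ ≤ I in the Loewner order. Then for every bounded operator A on H there exists a bounded operator B on H with ‖B‖ ≤ ‖A‖ such that (I − T₁)^{1/2} A (I − T₁)^{1/2} = (I − T₂)^{1/2} B (I − T₂)^{1/2}. In particular the set (I − T₁)^{1/2} B(H) (I − T₁)^{1/2} is contained in the set (I − T₂)^{1/2} B(H) (I − T₂)^{1/2}. -/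
open ContinuousLinearMap

set_option synthInstance.maxHeartbeats 1000000
set_option maxHeartbeats 1000000

/-- Douglas-type factorization: if `‖R₁ x‖ ≤ ‖R₂ x‖` for all `x`, then `R₁ = D * R₂`
for some contraction `D`. -/
lemma douglas_aux {H : Type*} [NormedAddCommGroup H] [InnerProductSpace ℂ H] [CompleteSpace H]
    (R₁ R₂ : H →L[ℂ] H) (hle : ∀ x, ‖R₁ x‖ ≤ ‖R₂ x‖) :
    ∃ D : H →L[ℂ] H, ‖D‖ ≤ 1 ∧ D * R₂ = R₁ := by
  classical
  set Rl : H →ₗ[ℂ] H := (R₂ : H →ₗ[ℂ] H) with hRl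
  have hker : LinearMap.ker Rl ≤ LinearMap.ker (R₁ : H →ₗ[ℂ] H) := by
    intro x hx
    have hx' : R₂ x = 0 := hx
    have := hle x
    rw [hx', norm_zero] at this
    simpa [LinearMap.mem_ker] using norm_le_zero_iff.mp this
  set M : Submodule ℂ H := LinearMap.range Rl with hM
  set f0 : M →ₗ[ℂ] H :=
    ((LinearMap.ker Rl).liftQ (R₁ : H →ₗ[ℂ] H) hker) ∘ₗ
      (LinearMap.quotKerEquivRange Rl).symm.toLinearMap with hf0
  have hf0_apply : ∀ x : H, f0 ⟨R₂ x, ⟨x, rfl⟩⟩ = R₁ x := by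
    intro x
    have h1 : (LinearMap.quotKerEquivRange Rl).symm ⟨Rl x, LinearMap.mem_range_self _ x⟩
        = (LinearMap.ker Rl).mkQ x := Rl.quotKerEquivRange_symm_apply_image x _
    have h2 : (⟨R₂ x, ⟨x, rfl⟩⟩ : M) = ⟨Rl x, LinearMap.mem_range_self _ x⟩ := rfl
    rw [hf0]
    simp only [LinearMap.coe_comp, Function.comp_apply, LinearEquiv.coe_coe, h2, h1]
    simp [Submodule.liftQ_apply]
  have hf0_bound : ∀ m : M, ‖f0 m‖ ≤ 1 * ‖m‖ := by
    rintro ⟨y, x, rfl⟩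
    have : f0 ⟨Rl x, ⟨x, rfl⟩⟩ = R₁ x := hf0_apply x
    rw [this, one_mul]
    exact hle x
  set f : M →L[ℂ] H := f0.mkContinuous 1 hf0_bound with hf
  have hf_apply : ∀ x : H, f ⟨R₂ x, ⟨x, rfl⟩⟩ = R₁ x := hf0_apply
  have hf_norm : ‖f‖ ≤ 1 := f0.mkContinuous_norm_le zero_le_one hf0_bound
  set N : Submodule ℂ H := M.topologicalClosure with hN
  have hMN : M ≤ N := M.le_topologicalClosure
  haveI : CompleteSpace N := M.isClosed_topologicalClosure.completeSpace_coe
  -- inclusion of M into N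
  set e : M →L[ℂ] N := (Submodule.inclusion hMN).mkContinuous 1
    (fun m => by rw [one_mul]; rfl) with he
  have he_apply : ∀ m : M, (e m : H) = (m : H) := fun m => rfl
  have h_dense : DenseRange e := by
    intro n
    rw [closure_subtype]
    have himg : (Subtype.val '' Set.range e : Set H) = (M : Set H) := by
      ext y
      constructor
      · rintro ⟨_, ⟨m, rfl⟩, rfl⟩
        exact m.2
      · intro hy
        exact ⟨e ⟨y, hy⟩, ⟨⟨y, hy⟩, rfl⟩, rfl⟩
    rw [himg, ← Submodule.topologicalClosure_coe]
    exact n.2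
  have h_e : ∀ m : M, ‖m‖ ≤ (1 : NNReal) * ‖e m‖ := fun m => by
    rw [NNReal.coe_one, one_mul]; rfl
  set F : N →L[ℂ] H :=
    f.extend e
    with hF
  have hF_norm : ‖F‖ ≤ 1 := by
    have := f.opNorm_extend_le h_dense h_e
    rw [NNReal.coe_one, one_mul] at this
    exact this.trans hf_norm
  have hF_apply : ∀ m : M, F (e m) = f m := fun m =>
    ContinuousLinearMap.extend_eq f h_dense
      (ContinuousLinearMap.isUniformEmbedding_of_bound _ h_e).isUniformInducing m
  refine ⟨F ∘L (Submodule.orthogonalProjectionOnto N : H →L[ℂ] N), ?_, ?_⟩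
  · calc ‖F ∘L (Submodule.orthogonalProjectionOnto N : H →L[ℂ] N)‖
        ≤ ‖F‖ * ‖(Submodule.orthogonalProjectionOnto N : H →L[ℂ] N)‖ := opNorm_comp_le _ _
      _ ≤ 1 * 1 := mul_le_mul hF_norm (Submodule.orthogonalProjectionOnto_norm_le N)
          (ContinuousLinearMap.opNorm_nonneg _) zero_le_one
      _ = 1 := one_mul 1
  · ext x
    have hmem : R₂ x ∈ N := hMN ⟨x, rfl⟩
    have hproj : Submodule.orthogonalProjectionOnto N (R₂ x) = ⟨R₂ x, hmem⟩ :=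
      Submodule.orthogonalProjectionOnto_mem_subspace_eq_self (K := N) ⟨R₂ x, hmem⟩
    have he' : e ⟨R₂ x, ⟨x, rfl⟩⟩ = (⟨R₂ x, hmem⟩ : N) := Subtype.ext rfl
    calc (F ∘L (Submodule.orthogonalProjectionOnto N : H →L[ℂ] N) * R₂) x
        = F (Submodule.orthogonalProjectionOnto N (R₂ x)) := rfl
      _ = F (⟨R₂ x, hmem⟩ : N) := by rw [hproj]
      _ = F (e ⟨R₂ x, ⟨x, rfl⟩⟩) := by rw [he']
      _ = f ⟨R₂ x, ⟨x, rfl⟩⟩ := hF_apply _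
      _ = R₁ x := hf_apply x

/-- If `0 ≤ T₂ ≤ T₁ ≤ I` are bounded self-adjoint operators on a complex Hilbert space `H`,
then for every bounded operator `A` there is `B` with `‖B‖ ≤ ‖A‖` and
`(I − T₁)^{1/2} A (I − T₁)^{1/2} = (I − T₂)^{1/2} B (I − T₂)^{1/2}`; in particular
`(I − T₁)^{1/2} B(H) (I − T₁)^{1/2} ⊆ (I − T₂)^{1/2} B(H) (I − T₂)^{1/2}`. -/
theorem stmt1 {H : Type*} [NormedAddCommGroup H] [InnerProductSpace ℂ H] [CompleteSpace H]
    (T₁ T₂ : H →L[ℂ] H) (h1 : IsSelfAdjoint T₁) (h2 : IsSelfAdjoint T₂)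
    (h0 : 0 ≤ T₂) (h21 : T₂ ≤ T₁) (hI : T₁ ≤ 1) :
    (∀ A : H →L[ℂ] H, ∃ B : H →L[ℂ] H, ‖B‖ ≤ ‖A‖ ∧
      CFC.sqrt (1 - T₁) * A * CFC.sqrt (1 - T₁)
        = CFC.sqrt (1 - T₂) * B * CFC.sqrt (1 - T₂)) ∧
    { X : H →L[ℂ] H | ∃ A : H →L[ℂ] H, X = CFC.sqrt (1 - T₁) * A * CFC.sqrt (1 - T₁) }
      ⊆ { X : H →L[ℂ] H | ∃ B : H →L[ℂ] H, X = CFC.sqrt (1 - T₂) * B * CFC.sqrt (1 - T₂) } := by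
  set S₁ : H →L[ℂ] H := 1 - T₁ with hS₁def
  set S₂ : H →L[ℂ] H := 1 - T₂ with hS₂def
  have hS₁ : 0 ≤ S₁ := sub_nonneg.mpr hI
  have hS₂ : 0 ≤ S₂ := sub_nonneg.mpr (h21.trans hI)
  have hS₁₂ : S₁ ≤ S₂ := by
    rw [hS₁def, hS₂def]
    exact sub_le_sub_left h21 1
  set R₁ : H →L[ℂ] H := CFC.sqrt S₁ with hR₁def
  set R₂ : H →L[ℂ] H := CFC.sqrt S₂ with hR₂def
  have hR₁pos : 0 ≤ R₁ := CFC.sqrt_nonneg _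
  have hR₂pos : 0 ≤ R₂ := CFC.sqrt_nonneg _
  have hR₁sa : IsSelfAdjoint R₁ := ((nonneg_iff_isPositive R₁).mp hR₁pos).isSelfAdjoint
  have hR₂sa : IsSelfAdjoint R₂ := ((nonneg_iff_isPositive R₂).mp hR₂pos).isSelfAdjoint
  have hR₁sq : R₁ * R₁ = S₁ := CFC.sqrt_mul_sqrt_self S₁ hS₁
  have hR₂sq : R₂ * R₂ = S₂ := CFC.sqrt_mul_sqrt_self S₂ hS₂
  -- norm identity : ‖R x‖^2 = re ⟪(R*R) x, x⟫
  have hnormsq : ∀ (R : H →L[ℂ] H), IsSelfAdjoint R → ∀ x : H,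
      ‖R x‖ ^ 2 = RCLike.re (inner ℂ ((R * R) x) x : ℂ) := by
    intro R hR x
    have h1 : (inner ℂ ((R * R) x) x : ℂ) = inner ℂ (R x) (R x) := by
      have h := ContinuousLinearMap.adjoint_inner_left R x (R x)
      rw [hR.adjoint_eq] at h
      exact h
    rw [h1]
    exact (inner_self_eq_norm_sq (𝕜 := ℂ) (R x)).symm
  have hle : ∀ x, ‖R₁ x‖ ≤ ‖R₂ x‖ := by
    intro x
    have hd : (S₂ - S₁).IsPositive := hS₁₂
    have hd2 : 0 ≤ RCLike.re (inner ℂ ((S₂ - S₁) x) x : ℂ) := hd.2 x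
    have hsub : (inner ℂ ((S₂ - S₁) x) x : ℂ) = inner ℂ (S₂ x) x - inner ℂ (S₁ x) x := by
      simp [inner_sub_left]
    rw [hsub, map_sub] at hd2
    have h1 := hnormsq R₁ hR₁sa x
    have h2 := hnormsq R₂ hR₂sa x
    rw [hR₁sq] at h1
    rw [hR₂sq] at h2
    nlinarith [norm_nonneg (R₁ x), norm_nonneg (R₂ x)]
  obtain ⟨D, hDnorm, hDR⟩ := douglas_aux R₁ R₂ hle
  have hadj : R₂ * star D = R₁ := by
    have := congrArg star hDR
    rwa [star_mul, hR₂sa.star_eq, hR₁sa.star_eq] at this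
  have main : ∀ A : H →L[ℂ] H, ∃ B : H →L[ℂ] H, ‖B‖ ≤ ‖A‖ ∧
      R₁ * A * R₁ = R₂ * B * R₂ := by
    intro A
    refine ⟨star D * A * D, ?_, ?_⟩
    · calc ‖star D * A * D‖ ≤ ‖star D * A‖ * ‖D‖ := norm_mul_le _ _
        _ ≤ ‖star D‖ * ‖A‖ * ‖D‖ :=
            mul_le_mul_of_nonneg_right (norm_mul_le _ _) (norm_nonneg _)
        _ = ‖D‖ * ‖A‖ * ‖D‖ := by rw [norm_star]
        _ ≤ 1 * ‖A‖ * 1 :=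
            mul_le_mul (mul_le_mul_of_nonneg_right hDnorm (norm_nonneg _)) hDnorm
              (norm_nonneg _) (by positivity)
        _ = ‖A‖ := by ring
    · nth_rewrite 1 [← hadj]
      rw [← hDR]
      simp only [mul_assoc]
  refine ⟨main, ?_⟩
  rintro X ⟨A, rfl⟩
  obtain ⟨B, _, hB⟩ := main A
  exact ⟨B, hB⟩
end

section
/- Let a, b, c, a', b', c' be complex numbers with |a| < 1 and |a'| < 1. Then the real number r := (1 − |a'|²)^{-1} |conj(a') b' + c'|² + (1 − |a|²)^{-1} |b'(1 − |a|²) − conj(a) b − c|² − (1 − |a a'|²)^{-1} |conj(a a')(a b' + b) + conj(a') c + c'|² is nonnegative. -/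
lemma key2 (s t U V W : ℝ) (hs : 0 ≤ s) (hs1 : s < 1) (ht : 0 ≤ t) (ht1 : t < 1)
    (hU : 0 ≤ U) (hV : 0 ≤ V) (hW : 0 ≤ W) (hWle : W ≤ U + t * V) :
    (1 - s ^ 2 * t ^ 2)⁻¹ * W ^ 2 ≤ (1 - t ^ 2)⁻¹ * U ^ 2 + (1 - s ^ 2)⁻¹ * V ^ 2 := by
  have hA : 0 < 1 - t ^ 2 := by nlinarith
  have hB : 0 < 1 - s ^ 2 := by nlinarith
  have hC : 0 < 1 - s ^ 2 * t ^ 2 := by nlinarith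
  rw [inv_mul_le_iff₀ hC]
  have h1 : W ^ 2 ≤ (U + t * V) ^ 2 := by nlinarith
  have h2 : (U + t * V) ^ 2 ≤ (1 - s ^ 2 * t ^ 2) * ((1 - t ^ 2)⁻¹ * U ^ 2 + (1 - s ^ 2)⁻¹ * V ^ 2) := by
    rw [show (1 - t ^ 2)⁻¹ * U ^ 2 + (1 - s ^ 2)⁻¹ * V ^ 2
        = ((1 - s ^ 2) * U ^ 2 + (1 - t ^ 2) * V ^ 2) / ((1 - t ^ 2) * (1 - s ^ 2)) by
      field_simp]
    rw [← mul_div_assoc, le_div_iff₀ (by positivity)]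
    nlinarith [sq_nonneg ((1 - t ^ 2) * V - t * (1 - s ^ 2) * U)]
  linarith

/-- The correction term `r` appearing in the composition law for the parameters
`(a,b,c,y)` of contractive local cocycles is nonnegative whenever `|a| < 1` and `|a'| < 1`. -/
theorem stmt2 (a b c a' b' c' : ℂ) (ha : ‖a‖ < 1) (ha' : ‖a'‖ < 1) :
    0 ≤ (1 - ‖a'‖ ^ 2)⁻¹ * ‖(starRingEnd ℂ) a' * b' + c'‖ ^ 2
      + (1 - ‖a‖ ^ 2)⁻¹ * ‖b' * ((1 : ℂ) - (‖a‖ : ℂ) ^ 2) - (starRingEnd ℂ) a * b - c‖ ^ 2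
      - (1 - ‖a * a'‖ ^ 2)⁻¹
          * ‖(starRingEnd ℂ) (a * a') * (a * b' + b) + (starRingEnd ℂ) a' * c + c'‖ ^ 2 := by
  set u := (starRingEnd ℂ) a' * b' + c' with hu
  set v := b' * ((1 : ℂ) - (‖a‖ : ℂ) ^ 2) - (starRingEnd ℂ) a * b - c with hv
  have hk : ((‖a‖ : ℂ)) ^ 2 = a * (starRingEnd ℂ) a := (Complex.mul_conj' a).symm
  have hw : (starRingEnd ℂ) (a * a') * (a * b' + b) + (starRingEnd ℂ) a' * c + c'
      = u - (starRingEnd ℂ) a' * v := by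
    rw [hu, hv, map_mul, hk]
    ring
  rw [hw]
  have hwle : ‖u - (starRingEnd ℂ) a' * v‖ ≤ ‖u‖ + ‖a'‖ * ‖v‖ := by
    refine (norm_sub_le _ _).trans ?_
    rw [norm_mul, RCLike.norm_conj]
  rw [sub_nonneg, norm_mul, mul_pow]
  exact key2 ‖a‖ ‖a'‖ ‖u‖ ‖v‖ _ (norm_nonneg a) ha (norm_nonneg a') ha'
    (norm_nonneg u) (norm_nonneg v) (norm_nonneg _) hwle
end

section
/- Let H be a complex Hilbert space, let α : B(H) → B(H) be a linear map which is positive (α(A) ≥ 0 whenever A ≥ 0) and unital (α(I) = I), and let V be an isometry on H (V*V = I). Then the following are equivalent: (1) α(A) V = V A for every A ∈ B(H); (2) V A V* ≤ α(A) for every A ≥ 0 in B(H). Moreover, when these hold, α(A) = V A V* + (I − V V*) α(A) (I − V V*) for every A ∈ B(H). -/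
open ContinuousLinearMap

set_option synthInstance.maxHeartbeats 1000000
set_option maxHeartbeats 1000000

section Aux

variable {H : Type*} [NormedAddCommGroup H] [InnerProductSpace ℂ H] [CompleteSpace H]

private lemma algMap_eq (r : ℝ) :
    algebraMap ℝ (H →L[ℂ] H) r = (r : ℂ) • 1 := by
  rw [Algebra.algebraMap_eq_smul_one]; norm_num

/-- Decomposition into self-adjoint "real" and "imaginary" parts. -/
private lemma decomp (A : H →L[ℂ] H) :
    ∃ B C : H →L[ℂ] H, IsSelfAdjoint B ∧ IsSelfAdjoint C ∧
      A = B + Complex.I • C ∧ star A = B - Complex.I • C := by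
  have hscal : Complex.I * 2⁻¹ * Complex.I = (-2⁻¹ : ℂ) := by
    rw [mul_comm Complex.I (2⁻¹ : ℂ), mul_assoc, Complex.I_mul_I]; ring
  refine ⟨(2⁻¹ : ℂ) • (A + star A), (2⁻¹ : ℂ) • (Complex.I • (star A - A)), ?_, ?_, ?_, ?_⟩
  · rw [IsSelfAdjoint, star_smul, star_add, star_star]
    simp [add_comm]
  · rw [IsSelfAdjoint, star_smul, star_smul, star_sub, star_star]
    simp [smul_smul]
    module
  · rw [smul_smul, smul_smul, hscal]
    module
  · rw [smul_smul, smul_smul, hscal]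
    module

/-- A positive linear map preserves self-adjointness. -/
private lemma pos_map_sa (α : (H →L[ℂ] H) →ₗ[ℂ] (H →L[ℂ] H))
    (hpos : ∀ A : H →L[ℂ] H, 0 ≤ A → 0 ≤ α A)
    (hunital : α 1 = 1) (A : H →L[ℂ] H) (hA : IsSelfAdjoint A) :
    IsSelfAdjoint (α A) := by
  have h0 : 0 ≤ A + (‖A‖ : ℂ) • 1 := by
    have h := sub_nonneg.mpr hA.neg_algebraMap_norm_le_self
    rwa [sub_neg_eq_add, algMap_eq] at h
  have hexp : α (A + (‖A‖ : ℂ) • 1) = α A + (‖A‖ : ℂ) • 1 := by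
    rw [map_add, map_smul, hunital]
  have h1 : IsSelfAdjoint (α (A + (‖A‖ : ℂ) • 1)) :=
    IsSelfAdjoint.of_nonneg (hpos _ h0)
  rw [hexp] at h1
  have h2 : IsSelfAdjoint ((‖A‖ : ℂ) • (1 : H →L[ℂ] H)) := by
    rw [IsSelfAdjoint, star_smul, star_one]
    norm_num
  simpa using h1.sub h2

/-- A positive linear map is star-preserving. -/
private lemma pos_map_star (α : (H →L[ℂ] H) →ₗ[ℂ] (H →L[ℂ] H))
    (hpos : ∀ A : H →L[ℂ] H, 0 ≤ A → 0 ≤ α A)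
    (hunital : α 1 = 1) (A : H →L[ℂ] H) :
    α (star A) = star (α A) := by
  obtain ⟨B, C, hB, hC, hA, hA'⟩ := decomp A
  have hαB : IsSelfAdjoint (α B) := pos_map_sa α hpos hunital B hB
  have hαC : IsSelfAdjoint (α C) := pos_map_sa α hpos hunital C hC
  have e1 : α (star A) = α B - Complex.I • α C := by rw [hA', map_sub, map_smul]
  have e2 : star (α A) = α B - Complex.I • α C := by
    rw [hA, map_add, map_smul, star_add, star_smul, hαB.star_eq, hαC.star_eq,
      Complex.star_def, Complex.conj_I]
    module
  rw [e1, e2]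

end Aux

/-- For a positive unital linear map `α` on `B(H)` and an isometry `V`, intertwining
(`α(A)V = VA` for all `A`) is equivalent to `V A V* ≤ α(A)` for all `A ≥ 0`; and in that
case `α(A) = V A V* + (I − VV*) α(A) (I − VV*)` for all `A`. -/
theorem stmt9 {H : Type*} [NormedAddCommGroup H] [InnerProductSpace ℂ H] [CompleteSpace H]
    (α : (H →L[ℂ] H) →ₗ[ℂ] (H →L[ℂ] H))
    (hpos : ∀ A : H →L[ℂ] H, 0 ≤ A → 0 ≤ α A)
    (hunital : α 1 = 1)
    (V : H →L[ℂ] H) (hV : adjoint V * V = 1) :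
    ((∀ A : H →L[ℂ] H, α A * V = V * A) ↔
      (∀ A : H →L[ℂ] H, 0 ≤ A → V * A * adjoint V ≤ α A)) ∧
    ((∀ A : H →L[ℂ] H, α A * V = V * A) →
      ∀ A : H →L[ℂ] H,
        α A = V * A * adjoint V + (1 - V * adjoint V) * α A * (1 - V * adjoint V)) := by
  set W : H →L[ℂ] H := adjoint V with hW
  have hVs : star V = W := star_eq_adjoint V
  have hWs : star W = V := by rw [hW, star_eq_adjoint, adjoint_adjoint]
  have hWV : ∀ x : H →L[ℂ] H, W * (V * x) = x := by
    intro x; rw [← mul_assoc, hV, one_mul]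
  -- the "moreover" part
  have mor : (∀ A : H →L[ℂ] H, α A * V = V * A) →
      ∀ A : H →L[ℂ] H,
        α A = V * A * W + (1 - V * W) * α A * (1 - V * W) := by
    intro h1 A
    have hstar' : W * α A = A * W := by
      have h := congrArg star (h1 (star A))
      rw [star_mul, star_mul, star_star, hVs,
        pos_map_star α hpos hunital A, star_star] at h
      exact h
    have hEL : (V * W) * α A = V * A * W := by
      rw [mul_assoc, hstar', ← mul_assoc]
    have hER : α A * (V * W) = V * A * W := by
      rw [← mul_assoc, h1 A]
    have e1 : (1 - V * W) * α A * (1 - V * W)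
        = α A - (V * W) * α A - α A * (V * W) + (V * W) * (α A * (V * W)) := by
      noncomm_ring
    have e2 : (V * W) * (V * A * W) = V * A * W := by
      simp only [mul_assoc, hWV]
    rw [e1, hEL, hER, e2]
    abel
  constructor
  · constructor
    · -- (1) → (2)
      intro h1 A hA
      have h := mor h1 A
      have hsub : α A - V * A * W = (1 - V * W) * α A * (1 - V * W) :=
        sub_eq_of_eq_add' h
      have hsa : star (1 - V * W : H →L[ℂ] H) = 1 - V * W := by
        rw [star_sub, star_one, star_mul, hVs, hWs]
      have hconj : 0 ≤ star (1 - V * W) * α A * (1 - V * W) :=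
        star_left_conjugate_nonneg (hpos A hA) _
      rw [hsa] at hconj
      rw [← hsub] at hconj
      exact sub_nonneg.mp hconj
    · -- (2) → (1)
      intro h2
      -- first for positive A
      have key : ∀ A : H →L[ℂ] H, 0 ≤ A → α A * V = V * A := by
        intro A hA
        set c : ℂ := (‖A‖ : ℂ) with hc
        have hα1 : α (c • 1) = c • 1 := by rw [map_smul, hunital]
        have hAle : A ≤ c • 1 := by
          have h := (IsSelfAdjoint.of_nonneg hA).le_algebraMap_norm_self
          rwa [algMap_eq] at h
        have hrA : 0 ≤ c • (1 : H →L[ℂ] H) - A := sub_nonneg.mpr hAle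
        have hD0 : 0 ≤ α A - V * A * W := sub_nonneg.mpr (h2 A hA)
        -- D ≤ c•1 - V (c•1) W
        have hDle : α A - V * A * W ≤ c • 1 - V * (c • 1) * W := by
          have h := h2 _ hrA
          rw [map_sub, hα1] at h
          rw [mul_sub, sub_mul] at h
          refine sub_le_sub_iff.mpr ?_
          rw [add_comm (α A) (V * (c • 1) * W)]
          exact sub_le_sub_iff.mp h
        -- conjugate by V
        have hzero : star V * (c • 1 - V * (c • 1) * W) * V = 0 := by
          rw [hVs]
          simp only [mul_sub, sub_mul, mul_smul_comm, smul_mul_assoc, mul_one, one_mul,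
            mul_assoc, hWV]
          simp [hV]
        have hconj1 : star V * (α A - V * A * W) * V ≤ 0 := by
          calc star V * (α A - V * A * W) * V
              ≤ star V * (c • 1 - V * (c • 1) * W) * V := star_left_conjugate_le_conjugate hDle V
            _ = 0 := hzero
        have hconj2 : 0 ≤ star V * (α A - V * A * W) * V := star_left_conjugate_nonneg hD0 V
        have hDV0 : star V * (α A - V * A * W) * V = 0 := le_antisymm hconj1 hconj2
        -- use the square root
        set s : H →L[ℂ] H := CFC.sqrt (α A - V * A * W) with hs
        have hs0 : 0 ≤ s := CFC.sqrt_nonneg _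
        have hss : s * s = α A - V * A * W := CFC.sqrt_mul_sqrt_self _ hD0
        have hsV : s * V = 0 := by
          rw [← CStarRing.star_mul_self_eq_zero_iff (s * V)]
          have e : star (s * V) * (s * V) = star V * (s * s) * V := by
            rw [star_mul, (IsSelfAdjoint.of_nonneg hs0).star_eq]
            noncomm_ring
          rw [e, hss, hDV0]
        have hDV : (α A - V * A * W) * V = 0 := by
          rw [← hss, mul_assoc, hsV, mul_zero]
        have h' : α A * V = V * A * W * V := by
          rw [sub_mul] at hDV
          exact sub_eq_zero.mp hDV
        rw [h', mul_assoc, mul_assoc, hV, mul_one]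
      -- now extend by linearity
      have keysa : ∀ A : H →L[ℂ] H, IsSelfAdjoint A → α A * V = V * A := by
        intro A hA
        have h0 : 0 ≤ A + (‖A‖ : ℂ) • 1 := by
          have h := sub_nonneg.mpr hA.neg_algebraMap_norm_le_self
          rwa [sub_neg_eq_add, algMap_eq] at h
        have h := key _ h0
        rw [map_add, map_smul, hunital, add_mul, mul_add, smul_mul_assoc, mul_smul_comm,
          one_mul, mul_one] at h
        exact add_right_cancel h
      intro A
      obtain ⟨B, C, hB, hC, hAeq, -⟩ := decomp A
      rw [hAeq, map_add, map_smul, add_mul, smul_mul_assoc, mul_add, mul_smul_comm,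
        keysa B hB, keysa C hC]
  · exact mor
end

section
/- Let A and B be positive semidefinite n×n complex matrices. Then trace((A^{1/2} − B^{1/2})²) ≤ trace(((A − B)²)^{1/2}). (That is, the squared Frobenius norm of A^{1/2} − B^{1/2} is bounded by the trace norm of A − B.) -/
open Matrix ComplexOrder Complex

noncomputable def Matrix.PosSemidef.sqrt {n : Type*} [Fintype n] [DecidableEq n] {𝕜 : Type*}
    [RCLike 𝕜] {A : Matrix n n 𝕜} (hA : A.PosSemidef) : Matrix n n 𝕜 :=
  hA.1.eigenvectorUnitary.1 * diagonal ((↑) ∘ (√·) ∘ hA.1.eigenvalues) *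
  (star hA.1.eigenvectorUnitary : Matrix n n 𝕜)

section sqrtport
open scoped MatrixOrder
variable {n : ℕ}
lemma Matrix.PosSemidef.sqrt_eq_cfcSqrt {A : Matrix (Fin n) (Fin n) ℂ} (hA : A.PosSemidef) :
    hA.sqrt = CFC.sqrt A := by
  rw [CFC.sqrt_eq_real_sqrt A hA.nonneg, cfcₙ_eq_cfc, hA.1.cfc_eq, IsHermitian.cfc, Unitary.conjStarAlgAut_apply]
  rfl
lemma Matrix.PosSemidef.posSemidef_sqrt {A : Matrix (Fin n) (Fin n) ℂ} (hA : A.PosSemidef) :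
    hA.sqrt.PosSemidef := by
  rw [hA.sqrt_eq_cfcSqrt]; exact (CFC.sqrt_nonneg A).posSemidef
lemma Matrix.PosSemidef.sqrt_mul_self {A : Matrix (Fin n) (Fin n) ℂ} (hA : A.PosSemidef) :
    hA.sqrt * hA.sqrt = A := by
  rw [hA.sqrt_eq_cfcSqrt]; exact CFC.sqrt_mul_sqrt_self A hA.nonneg
lemma Matrix.PosSemidef.eq_sqrt_of_sq_eq {A B : Matrix (Fin n) (Fin n) ℂ} (hA : A.PosSemidef)
    (hB : B.PosSemidef) (h : A ^ 2 = B) : A = hB.sqrt := by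
  rw [hB.sqrt_eq_cfcSqrt, eq_comm]
  exact CFC.sqrt_unique (by rw [← sq]; exact h) hA.nonneg
end sqrtport

section helpers
variable {n : ℕ}
lemma conj_mul_conj (U M N : Matrix (Fin n) (Fin n) ℂ) (hU : star U * U = 1) :
    (U * M * star U) * (U * N * star U) = U * (M * N) * star U := by
  calc (U * M * star U) * (U * N * star U)
      = U * M * (star U * U) * N * star U := by simp only [Matrix.mul_assoc]
    _ = U * (M * N) * star U := by rw [hU, Matrix.mul_one, Matrix.mul_assoc U M N]

lemma trace_unitary_conj (U M : Matrix (Fin n) (Fin n) ℂ) (hU : star U * U = 1) :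
    (U * M * star U).trace = M.trace := by
  rw [Matrix.trace_mul_comm, ← Matrix.mul_assoc, hU, Matrix.one_mul]

lemma trace_diagonal_mul' (d : Fin n → ℂ) (M : Matrix (Fin n) (Fin n) ℂ) :
    (Matrix.diagonal d * M).trace = ∑ i, d i * M i i := by
  simp [Matrix.trace, Matrix.diag, Matrix.diagonal_mul]

lemma trace_conj_mul (U : Matrix (Fin n) (Fin n) ℂ) (d : Fin n → ℂ)
    (K : Matrix (Fin n) (Fin n) ℂ) :
    (U * Matrix.diagonal d * star U * K).trace = ∑ i, d i * (star U * K * U) i i := by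
  have h1 : U * Matrix.diagonal d * star U * K
      = U * (Matrix.diagonal d * (star U * K)) := by simp only [Matrix.mul_assoc]
  rw [h1, Matrix.trace_mul_comm, Matrix.mul_assoc, trace_diagonal_mul']

lemma conj_diag_entry (W : Matrix (Fin n) (Fin n) ℂ) (d : Fin n → ℝ) (j : Fin n) :
    (star W * Matrix.diagonal (fun i => (d i : ℂ)) * W) j j
      = ((∑ i, d i * Complex.normSq (W i j) : ℝ) : ℂ) := by
  rw [Matrix.mul_apply]
  push_cast
  refine Finset.sum_congr rfl fun i _ => ?_
  rw [Matrix.mul_diagonal, Matrix.star_apply]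
  rw [mul_comm (star (W i j)) ((d i : ℂ)), mul_assoc, RCLike.star_def,
    mul_comm ((starRingEnd ℂ) (W i j)) (W i j), Complex.mul_conj]

lemma column_normSq_eq_one (W : Matrix (Fin n) (Fin n) ℂ) (hW : star W * W = 1) (j : Fin n) :
    ∑ i, Complex.normSq (W i j) = 1 := by
  have h := conj_diag_entry W (fun _ => 1) j
  rw [show Matrix.diagonal (fun _ : Fin n => ((1:ℝ):ℂ)) = 1 by simp,
    Matrix.mul_one, hW, Matrix.one_apply_eq] at h
  have := (Complex.ofReal_eq_one).mp h.symm
  simpa using this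


lemma sign_mul_self' (x : ℝ) : Real.sign x * x = |x| := by
  rcases lt_trichotomy x 0 with h|h|h
  · rw [Real.sign_of_neg h, abs_of_neg h]; ring
  · simp [h]
  · rw [Real.sign_of_pos h, abs_of_pos h]; ring

lemma abs_sign_le_one (x : ℝ) : |Real.sign x| ≤ 1 := by
  rcases lt_trichotomy x 0 with h|h|h
  · rw [Real.sign_of_neg h]; norm_num
  · simp [h]
  · rw [Real.sign_of_pos h]; norm_num

lemma psd_diag_nonneg {M : Matrix (Fin n) (Fin n) ℂ} (hM : M.PosSemidef) (i : Fin n) :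
    0 ≤ M i i := by
  exact hM.diag_nonneg

end helpers

/-- For positive semidefinite complex matrices `A`, `B`,
`trace((A^{1/2} − B^{1/2})²) ≤ trace(((A − B)²)^{1/2})`: the squared Frobenius norm of
`A^{1/2} − B^{1/2}` is bounded by the trace norm of `A − B`.  (Both traces are real and
the inequality is in the standard order on `ℂ`.) -/
theorem stmt10 {n : ℕ} (A B : Matrix (Fin n) (Fin n) ℂ)
    (hA : A.PosSemidef) (hB : B.PosSemidef) (hAB : ((A - B) ^ 2).PosSemidef) :
    ((hA.sqrt - hB.sqrt) ^ 2).trace ≤ hAB.sqrt.trace := by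
  set C := hA.sqrt with hCdef
  set D := hB.sqrt with hDdef
  have hC : C.PosSemidef := hA.posSemidef_sqrt
  have hD : D.PosSemidef := hB.posSemidef_sqrt
  have hh : (C - D).IsHermitian := hC.1.sub hD.1
  have hX : (A - B).IsHermitian := hA.1.sub hB.1
  set U : Matrix (Fin n) (Fin n) ℂ := (hh.eigenvectorUnitary : Matrix (Fin n) (Fin n) ℂ) with hUdef
  set V : Matrix (Fin n) (Fin n) ℂ := (hX.eigenvectorUnitary : Matrix (Fin n) (Fin n) ℂ) with hVdef
  set lam : Fin n → ℝ := hh.eigenvalues with hlamdef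
  set mu : Fin n → ℝ := hX.eigenvalues with hmudef
  have hUU : star U * U = 1 := mem_unitaryGroup_iff'.mp (hh.eigenvectorUnitary).2
  have hVV : star V * V = 1 := mem_unitaryGroup_iff'.mp (hX.eigenvectorUnitary).2
  have hUU' : U * star U = 1 := mem_unitaryGroup_iff.mp (hh.eigenvectorUnitary).2
  have hVV' : V * star V = 1 := mem_unitaryGroup_iff.mp (hX.eigenvectorUnitary).2
  have hspech : C - D = U * diagonal (fun i => (lam i : ℂ)) * star U := hh.spectral_theorem
  have hspecX : A - B = V * diagonal (fun j => (mu j : ℂ)) * star V := hX.spectral_theorem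
  -- the sign matrix and the abs matrix
  set s : Matrix (Fin n) (Fin n) ℂ :=
    U * diagonal (fun i => ((Real.sign (lam i) : ℝ) : ℂ)) * star U with hsdef
  set m : Matrix (Fin n) (Fin n) ℂ :=
    U * diagonal (fun i => ((|lam i| : ℝ) : ℂ)) * star U with hmdef
  set k : Matrix (Fin n) (Fin n) ℂ := C + D with hkdef
  -- step 1 : LHS trace
  have e1 : ((C - D) ^ 2).trace = ((∑ i, lam i ^ 2 : ℝ) : ℂ) := by
    rw [pow_two, hspech, conj_mul_conj _ _ _ hUU, trace_unitary_conj _ _ hUU,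
      diagonal_mul_diagonal, Matrix.trace_diagonal]
    push_cast
    simp [sq]
  -- step 2 : RHS trace
  have e2 : hAB.sqrt.trace = ((∑ j, |mu j| : ℝ) : ℂ) := by
    have hdg : PosSemidef (diagonal (fun j => ((|mu j| : ℝ) : ℂ))) :=
      PosSemidef.diagonal (fun j => Complex.zero_le_real.mpr (abs_nonneg _))
    have hW : PosSemidef (V * diagonal (fun j => ((|mu j| : ℝ) : ℂ)) * star V) := by
      simpa [Matrix.star_eq_conjTranspose] using hdg.mul_mul_conjTranspose_same V
    have hsq : (V * diagonal (fun j => ((|mu j| : ℝ) : ℂ)) * star V) ^ 2 = (A - B) ^ 2 := by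
      rw [pow_two, pow_two, conj_mul_conj _ _ _ hVV, hspecX, conj_mul_conj _ _ _ hVV,
        diagonal_mul_diagonal, diagonal_mul_diagonal]
      have hfun2 : (fun j => ((|mu j| : ℝ) : ℂ) * ((|mu j| : ℝ) : ℂ))
          = (fun j => ((mu j : ℝ) : ℂ) * ((mu j : ℝ) : ℂ)) := by
        funext j
        rw [← Complex.ofReal_mul, ← Complex.ofReal_mul, abs_mul_abs_self]
      rw [hfun2]
    have heq := hW.eq_sqrt_of_sq_eq hAB hsq
    rw [← heq, trace_unitary_conj _ _ hVV, Matrix.trace_diagonal]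
    push_cast
    rfl
  -- step 3 : s * (C−D) = m = (C−D) * s
  have f1 : s * (C - D) = m := by
    rw [hsdef, hmdef, hspech, conj_mul_conj _ _ _ hUU, diagonal_mul_diagonal]
    have hfun : (fun i => ((Real.sign (lam i) : ℝ) : ℂ) * ((lam i : ℝ) : ℂ))
        = fun i => ((|lam i| : ℝ) : ℂ) := by
      funext i
      rw [← Complex.ofReal_mul, sign_mul_self']
    rw [hfun]
  have f2 : (C - D) * s = m := by
    rw [hsdef, hmdef, hspech, conj_mul_conj _ _ _ hUU, diagonal_mul_diagonal]
    have hfun : (fun i => ((lam i : ℝ) : ℂ) * ((Real.sign (lam i) : ℝ) : ℂ))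
        = fun i => ((|lam i| : ℝ) : ℂ) := by
      funext i
      rw [← Complex.ofReal_mul, mul_comm (lam i), sign_mul_self']
    rw [hfun]
  -- step 4 : trace((A−B)*s) = trace(m*k)
  have f3 : ((A - B) * s).trace = (m * k).trace := by
    have hAB2 : A - B = C * C - D * D := by
      rw [hCdef, hDdef, hA.sqrt_mul_self, hB.sqrt_mul_self]
    have expand : (A - B) * s + (A - B) * s = (C - D) * (k * s) + k * ((C - D) * s) := by
      rw [hAB2, hkdef]; noncomm_ring
    have h1 : ((C - D) * (k * s)).trace = (m * k).trace := by
      rw [show (C - D) * (k * s) = ((C - D) * k) * s from (Matrix.mul_assoc _ _ _).symm,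
        Matrix.trace_mul_comm, ← Matrix.mul_assoc, f1]
    have h2 : (k * ((C - D) * s)).trace = (m * k).trace := by
      rw [f2, Matrix.trace_mul_comm]
    have h3 := congrArg Matrix.trace expand
    rw [Matrix.trace_add, Matrix.trace_add, h1, h2] at h3
    have h4 : (2 : ℂ) * ((A - B) * s).trace = 2 * (m * k).trace := by
      rw [two_mul, two_mul]; exact h3
    exact mul_left_cancel₀ two_ne_zero h4
  -- step 5 : Σ λ² ≤ re (trace (m*k))
  have f5 : ∑ i, lam i ^ 2 ≤ ((m * k).trace).re := by
    set Q : Matrix (Fin n) (Fin n) ℂ := star U * k * U with hQdef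
    have hdiagCD : star U * (C - D) * U = diagonal (fun i => ((lam i : ℝ) : ℂ)) :=
      calc star U * (C - D) * U
          = (star U * U) * diagonal (fun i => ((lam i : ℝ) : ℂ)) * (star U * U) := by
            rw [hspech]; simp only [Matrix.mul_assoc]
        _ = diagonal (fun i => ((lam i : ℝ) : ℂ)) := by rw [hUU, Matrix.one_mul, Matrix.mul_one]
    have hQp : (Q + diagonal (fun i => ((lam i : ℝ) : ℂ))).PosSemidef := by
      have h2C : (C + C).PosSemidef := hC.add hC
      have hps := h2C.conjTranspose_mul_mul_same U
      rw [← Matrix.star_eq_conjTranspose] at hps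
      have heq : star U * (C + C) * U = Q + diagonal (fun i => ((lam i : ℝ) : ℂ)) := by
        rw [hQdef, ← hdiagCD, hkdef, show C + C = (C + D) + (C - D) by abel]
        simp only [Matrix.mul_add, Matrix.add_mul]
      rwa [heq] at hps
    have hQm : (Q - diagonal (fun i => ((lam i : ℝ) : ℂ))).PosSemidef := by
      have h2D : (D + D).PosSemidef := hD.add hD
      have hps := h2D.conjTranspose_mul_mul_same U
      rw [← Matrix.star_eq_conjTranspose] at hps
      have heq : star U * (D + D) * U = Q - diagonal (fun i => ((lam i : ℝ) : ℂ)) := by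
        rw [hQdef, ← hdiagCD, hkdef, show D + D = (C + D) - (C - D) by abel]
        simp only [Matrix.mul_sub, Matrix.sub_mul]
      rwa [heq] at hps
    have hb : ∀ i, |lam i| ≤ (Q i i).re := by
      intro i
      have h1 := psd_diag_nonneg hQp i
      have h2 := psd_diag_nonneg hQm i
      rw [Matrix.add_apply, Matrix.diagonal_apply_eq] at h1
      rw [Matrix.sub_apply, Matrix.diagonal_apply_eq] at h2
      have r1 : 0 ≤ (Q i i).re + lam i := by
        have := (Complex.nonneg_iff.mp h1).1; simpa using this
      have r2 : 0 ≤ (Q i i).re - lam i := by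
        have := (Complex.nonneg_iff.mp h2).1; simpa using this
      rw [abs_le]; constructor <;> linarith
    have tf : (m * k).trace = ∑ i, ((|lam i| : ℝ) : ℂ) * Q i i := by
      rw [hmdef, trace_conj_mul]
    rw [tf, Complex.re_sum]
    refine Finset.sum_le_sum fun i _ => ?_
    rw [Complex.re_ofReal_mul]
    calc lam i ^ 2 = |lam i| * |lam i| := by rw [abs_mul_abs_self, sq]
      _ ≤ |lam i| * (Q i i).re := mul_le_mul_of_nonneg_left (hb i) (abs_nonneg _)
  -- step 6 : trace((A−B)*s) = ↑(Σ μ_j r_j) with |r j| ≤ 1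
  obtain ⟨r, hr1, hr2⟩ : ∃ r : Fin n → ℝ, (∀ j, |r j| ≤ 1) ∧
      ((A - B) * s).trace = ((∑ j, mu j * r j : ℝ) : ℂ) := by
    set W : Matrix (Fin n) (Fin n) ℂ := star U * V with hWdef
    have hWW : star W * W = 1 := by
      rw [hWdef, Matrix.star_mul, star_star]
      calc star V * U * (star U * V) = star V * (U * star U) * V := by
            simp only [Matrix.mul_assoc]
        _ = 1 := by rw [hUU', Matrix.mul_one, hVV]
    refine ⟨fun j => ∑ i, Real.sign (lam i) * Complex.normSq (W i j), fun j => ?_, ?_⟩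
    · have hcol := column_normSq_eq_one W hWW j
      calc |∑ i, Real.sign (lam i) * Complex.normSq (W i j)|
          ≤ ∑ i, |Real.sign (lam i) * Complex.normSq (W i j)| :=
            Finset.abs_sum_le_sum_abs _ _
        _ ≤ ∑ i, Complex.normSq (W i j) := by
            refine Finset.sum_le_sum fun i _ => ?_
            rw [abs_mul, _root_.abs_of_nonneg (Complex.normSq_nonneg _)]
            exact mul_le_of_le_one_left (Complex.normSq_nonneg _) (abs_sign_le_one _)
        _ = 1 := hcol
    · have t1 : ((A - B) * s).trace = ∑ j, ((mu j : ℝ) : ℂ) * (star V * s * V) j j := by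
        conv_lhs => rw [hspecX]
        rw [trace_conj_mul]
      have t2 : ∀ j, (star V * s * V) j j
          = (star W * diagonal (fun i => ((Real.sign (lam i) : ℝ) : ℂ)) * W) j j := by
        intro j
        rw [hsdef, hWdef, Matrix.star_mul, star_star]
        simp only [Matrix.mul_assoc]
      have t3 : ∀ j, ((mu j : ℝ) : ℂ) * (star V * s * V) j j
          = ((mu j * (∑ i, Real.sign (lam i) * Complex.normSq (W i j)) : ℝ) : ℂ) := by
        intro j
        rw [t2 j, conj_diag_entry]
        push_cast
        ring
      rw [t1, Finset.sum_congr rfl fun j _ => t3 j, ← Complex.ofReal_sum]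
  -- final chain
  have hreal : ∑ i, lam i ^ 2 ≤ ∑ j, |mu j| := by
    have h6 : ((m * k).trace).re = ∑ j, mu j * r j := by rw [← f3, hr2, Complex.ofReal_re]
    refine le_trans (f5.trans_eq h6) ?_
    refine Finset.sum_le_sum fun j _ => ?_
    calc mu j * r j ≤ |mu j * r j| := le_abs_self _
      _ = |mu j| * |r j| := abs_mul _ _
      _ ≤ |mu j| * 1 := by
          exact mul_le_mul_of_nonneg_left (hr1 j) (abs_nonneg _)
      _ = |mu j| := mul_one _
  rw [e1, e2]
  exact_mod_cast Complex.real_le_real.mpr hreal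
end

section
/- Let g : (0,∞) → ℂ be a measurable function such that for every a > 0 the truncation g·1_{(a,∞)} belongs to L²((0,∞)), but ∫₀^∞ |g(x)|² dx = ∞. For a > 0 let M_a = { f ∈ L²((0,∞)) : f = 0 almost everywhere on (0,a) and ∫_a^∞ conj(g(x)) f(x) dx = 0 }. Then the union ⋃_{a>0} M_a is dense in L²((0,∞)). -/
open MeasureTheory

set_option synthInstance.maxHeartbeats 1000000
set_option maxHeartbeats 1000000

open Set Filter ENNReal Topology

section Stmt13Aux

lemma stmt13_sq_eLpNorm {α : Type*} [MeasurableSpace α] (h : α → ℂ) (m : Measure α) :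
    eLpNorm h 2 m ^ 2 = ∫⁻ x, (‖h x‖₊ : ℝ≥0∞) ^ 2 ∂m := by
  rw [eLpNorm_eq_lintegral_rpow_enorm_toReal (by norm_num) (by norm_num)]
  rw [← ENNReal.rpow_natCast _ 2, ← ENNReal.rpow_mul]
  norm_num
  rfl

lemma stmt13_indicator_sq (s : Set ℝ) (h : ℝ → ℂ) (x : ℝ) :
    (‖s.indicator h x‖₊ : ℝ≥0∞) ^ 2 = s.indicator (fun x => (‖h x‖₊ : ℝ≥0∞) ^ 2) x := by
  by_cases hx : x ∈ s <;> simp [hx]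

lemma stmt13_conj_mul (z : ℂ) : (starRingEnd ℂ) z * z = ((‖z‖ ^ 2 : ℝ) : ℂ) := by
  rw [mul_comm, Complex.mul_conj, Complex.normSq_eq_norm_sq]

end Stmt13Aux

/-- If `g` is measurable on `(0,∞)` with every truncation `g·1_{(a,∞)}` in `L²` but
`∫₀^∞ |g|² = ∞`, then the union over `a > 0` of the subspaces
`M_a = {f ∈ L²((0,∞)) : f = 0 a.e. on (0,a), ∫_a^∞ conj(g) f = 0}` is dense in `L²((0,∞))`. -/
theorem stmt13 (g : ℝ → ℂ) (hmeas : Measurable g)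
    (htrunc : ∀ a : ℝ, 0 < a →
      MemLp (Set.indicator (Set.Ioi a) g) 2 (volume.restrict (Set.Ioi (0 : ℝ))))
    (hdiv : ∫⁻ x in Set.Ioi (0 : ℝ), (‖g x‖₊ : ENNReal) ^ 2 = ⊤) :
    Dense (⋃ (a : ℝ) (_ : 0 < a),
      { f : Lp ℂ 2 (volume.restrict (Set.Ioi (0 : ℝ))) |
        (∀ᵐ x ∂(volume.restrict (Set.Ioi (0 : ℝ))), x ∈ Set.Ioo 0 a → f x = 0) ∧
        ∫ x in Set.Ioi a, (starRingEnd ℂ) (g x) * f x = 0 }) := by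
  classical
  set μ : Measure ℝ := volume.restrict (Set.Ioi (0 : ℝ)) with hμdef
  rw [Metric.dense_iff]
  intro f ε hε
  -- Part A: truncate f near 0
  have hf2 : ∫⁻ x, (‖f x‖₊ : ℝ≥0∞) ^ 2 ∂μ < ⊤ := by
    rw [← stmt13_sq_eLpNorm]
    exact ENNReal.pow_lt_top (Lp.memLp f).2
  set νf : Measure ℝ := μ.withDensity (fun x => (‖f x‖₊ : ℝ≥0∞) ^ 2) with hνf
  have hνf_fin : ∀ s : Set ℝ, MeasurableSet s → νf s ≠ ⊤ := by
    intro s hs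
    rw [hνf, withDensity_apply _ hs]
    exact ((setLIntegral_le_lintegral _ _).trans_lt hf2).ne
  have hiInter : ⋂ n : ℕ, Ioc (0:ℝ) (1/(n+1)) = ∅ := by
    ext x
    simp only [Set.mem_iInter, Set.mem_Ioc, Set.mem_empty_iff_false, iff_false]
    intro hx
    obtain ⟨m, hm⟩ := exists_nat_one_div_lt (hx 0).1
    exact absurd (hx m).2 (not_le.mpr hm)
  have hkey : Tendsto (fun n : ℕ => νf (Ioc (0:ℝ) (1/(n+1)))) atTop (𝓝 0) := by
    have := tendsto_measure_iInter_atTop (μ := νf)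
      (s := fun n : ℕ => Ioc (0:ℝ) (1/(n+1)))
      (fun n => measurableSet_Ioc.nullMeasurableSet)
      (fun m n hmn => Set.Ioc_subset_Ioc_right (by
        apply one_div_le_one_div_of_le
        · positivity
        · exact_mod_cast add_le_add_left (Nat.cast_le.mpr hmn) 1))
      ⟨0, hνf_fin _ measurableSet_Ioc⟩
    rwa [hiInter, measure_empty] at this
  have hpos2 : (0:ℝ≥0∞) < (ENNReal.ofReal (ε/2)) ^ 2 := by
    have : (0:ℝ≥0∞) < ENNReal.ofReal (ε/2) := ENNReal.ofReal_pos.mpr (by linarith)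
    positivity
  obtain ⟨n, hn⟩ := (hkey.eventually_lt_const hpos2).exists
  set a : ℝ := 1/(n+1) with ha_def
  have ha : 0 < a := by positivity
  have hfa_mem : MemLp (Set.indicator (Set.Ioi a) ⇑f) 2 μ :=
    (Lp.memLp f).indicator measurableSet_Ioi
  set fa : Lp ℂ 2 μ := hfa_mem.toLp _ with hfa_def
  have hfa : ⇑fa =ᵐ[μ] Set.indicator (Set.Ioi a) ⇑f := hfa_mem.coeFn_toLp
  have hdist1 : dist f fa < ε / 2 := by
    rw [Lp.dist_def]
    have hee : (⇑f - ⇑fa) =ᵐ[μ] Set.indicator (Set.Ioc 0 a) ⇑f := by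
      filter_upwards [hfa, ae_restrict_mem measurableSet_Ioi] with x h1 h2
      simp only [Pi.sub_apply, h1]
      by_cases hx : x ∈ Set.Ioi a
      · rw [Set.indicator_of_mem hx, Set.indicator_of_notMem (fun h => absurd h.2 (not_le.mpr hx)),
          sub_self]
      · rw [Set.indicator_of_notMem hx,
          Set.indicator_of_mem (show x ∈ Set.Ioc 0 a from ⟨h2, le_of_not_gt hx⟩), sub_zero]
    rw [eLpNorm_congr_ae hee]
    have hsq : eLpNorm (Set.indicator (Set.Ioc 0 a) ⇑f) 2 μ ^ 2 = νf (Set.Ioc 0 a) := by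
      rw [stmt13_sq_eLpNorm, hνf, withDensity_apply _ measurableSet_Ioc,
        ← lintegral_indicator measurableSet_Ioc]
      exact lintegral_congr fun x => stmt13_indicator_sq _ _ _
    have hlt : eLpNorm (Set.indicator (Set.Ioc 0 a) ⇑f) 2 μ < ENNReal.ofReal (ε/2) := by
      by_contra hcon
      push_neg at hcon
      have := pow_le_pow_left₀ zero_le hcon 2
      rw [hsq] at this
      exact absurd (this.trans_lt hn) (lt_irrefl _)
    exact ENNReal.toReal_lt_of_lt_ofReal hlt
  -- Part B: divergence of ∫|g|² near 0, choice of b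
  set c : ℂ := ∫ x in Set.Ioi a, (starRingEnd ℂ) (g x) * fa x with hc_def
  set Ggr : ℝ → ℝ≥0∞ := fun x => (‖g x‖₊ : ℝ≥0∞) ^ 2 with hGgr_def
  have hGgrm : Measurable Ggr := (hmeas.nnnorm.coe_nnreal_ennreal).pow_const 2
  set ν : Measure ℝ := volume.withDensity Ggr with hν_def
  have hν_Ioi : ∀ t : ℝ, 0 < t → ν (Set.Ioi t) ≠ ⊤ := by
    intro t ht
    have h1 : eLpNorm (Set.indicator (Set.Ioi t) g) 2 μ ^ 2 < ⊤ :=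
      ENNReal.pow_lt_top (htrunc t ht).2
    rw [stmt13_sq_eLpNorm] at h1
    have h2 : ∫⁻ x, (Set.Ioi t).indicator Ggr x ∂μ < ⊤ := by
      refine lt_of_eq_of_lt ?_ h1
      exact lintegral_congr fun x => (stmt13_indicator_sq _ _ _).symm
    rw [lintegral_indicator measurableSet_Ioi, hμdef,
      Measure.restrict_restrict measurableSet_Ioi,
      Set.inter_eq_left.mpr (Set.Ioi_subset_Ioi ht.le)] at h2
    rw [hν_def, withDensity_apply _ measurableSet_Ioi]
    exact h2.ne
  have hν_top : ν (Set.Ioc 0 a) = ⊤ := by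
    have h0 : ν (Set.Ioi (0:ℝ)) = ⊤ := by
      rw [hν_def, withDensity_apply _ measurableSet_Ioi]; exact hdiv
    by_contra hcon
    have hsub : Set.Ioi (0:ℝ) ⊆ Set.Ioc 0 a ∪ Set.Ioi a := by
      intro x hx
      rcases le_or_gt x a with h | h
      · exact Or.inl ⟨hx, h⟩
      · exact Or.inr h
    have hle : ν (Set.Ioi (0:ℝ)) ≤ ν (Set.Ioc 0 a) + ν (Set.Ioi a) :=
      (measure_mono hsub).trans (measure_union_le _ _)
    rw [h0] at hle
    exact absurd (top_le_iff.mp hle)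
      (ENNReal.add_ne_top.mpr ⟨hcon, hν_Ioi a ha⟩)
  have hsupb : ∀ N : ℝ≥0∞, N ≠ ⊤ → ∃ b : ℝ, 0 < b ∧ b < a ∧ N < ν (Set.Ioc b a) := by
    intro N hN
    have hmono : Monotone (fun n : ℕ => Set.Ioc (a/(n+2)) a) := by
      intro m n hmn
      apply Set.Ioc_subset_Ioc_left
      apply div_le_div_of_nonneg_left ha.le (by positivity)
      exact_mod_cast add_le_add_left (Nat.cast_le.mpr hmn) 2
    have hU : (⋃ n : ℕ, Set.Ioc (a/(n+2)) a) = Set.Ioc 0 a := by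
      ext x
      simp only [Set.mem_iUnion, Set.mem_Ioc]
      constructor
      · rintro ⟨n, h1, h2⟩
        exact ⟨lt_trans (by positivity) h1, h2⟩
      · rintro ⟨h1, h2⟩
        obtain ⟨n, hn⟩ := exists_nat_gt (a / x)
        refine ⟨n, ?_, h2⟩
        rw [div_lt_iff₀ (by positivity)]
        have hnn : (0:ℝ) ≤ (n:ℝ) := Nat.cast_nonneg n
        have : a < n * x := by
          calc a = (a / x) * x := by field_simp
          _ < n * x := mul_lt_mul_of_pos_right hn h1
        nlinarith
    have hiSup : (⨆ n : ℕ, ν (Set.Ioc (a/(n+2)) a)) = ⊤ := by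
      rw [← hmono.directed_le.measure_iUnion, hU, hν_top]
    have : N < ⨆ n : ℕ, ν (Set.Ioc (a/(n+2)) a) := by
      rw [hiSup]; exact hN.lt_top
    obtain ⟨n, hn⟩ := lt_iSup_iff.mp this
    exact ⟨a/(n+2), by positivity, div_lt_self ha (by
      have hnn : (0:ℝ) ≤ (n:ℝ) := Nat.cast_nonneg n
      linarith), hn⟩
  set T : ℝ := (2 * ‖c‖ / ε) ^ 2 + 1 with hT_def
  obtain ⟨b, hb0, hba, hbN⟩ := hsupb (ENNReal.ofReal T) ENNReal.ofReal_ne_top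
  -- Part C: the correction function k and the element f'
  have hk_eqf : Set.indicator (Set.Ioc b a) g
      = Set.indicator (Set.Ioc b a) (Set.indicator (Set.Ioi b) g) := by
    funext x
    by_cases hx : x ∈ Set.Ioc b a
    · rw [Set.indicator_of_mem hx, Set.indicator_of_mem hx]
      exact (Set.indicator_of_mem hx.1 g).symm
    · rw [Set.indicator_of_notMem hx, Set.indicator_of_notMem hx]
  have hk_mem : MemLp (Set.indicator (Set.Ioc b a) g) 2 μ := by
    rw [hk_eqf]; exact (htrunc b hb0).indicator measurableSet_Ioc
  set k : Lp ℂ 2 μ := hk_mem.toLp _ with hk_def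
  have hkae : ⇑k =ᵐ[μ] Set.indicator (Set.Ioc b a) g := hk_mem.coeFn_toLp
  set L : ℝ≥0∞ := ν (Set.Ioc b a) with hL_def
  have hLlt : L < ⊤ := lt_of_le_of_lt (measure_mono Set.Ioc_subset_Ioi_self)
    (lt_top_iff_ne_top.mpr (hν_Ioi b hb0))
  have hnormk : ‖k‖ ^ 2 = L.toReal := by
    rw [hk_def, Lp.norm_toLp, ← ENNReal.toReal_pow]
    congr 1
    rw [stmt13_sq_eLpNorm]
    calc ∫⁻ x, (‖Set.indicator (Set.Ioc b a) g x‖₊ : ℝ≥0∞) ^ 2 ∂μ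
        = ∫⁻ x, (Set.Ioc b a).indicator Ggr x ∂μ :=
          lintegral_congr fun x => stmt13_indicator_sq _ _ _
      _ = ∫⁻ x in Set.Ioc b a, Ggr x ∂μ := lintegral_indicator measurableSet_Ioc _
      _ = ∫⁻ x in Set.Ioc b a, Ggr x ∂volume := by
          rw [hμdef, Measure.restrict_restrict measurableSet_Ioc,
            Set.inter_eq_left.mpr (show Set.Ioc b a ⊆ Set.Ioi 0 from fun x hx => lt_trans hb0 hx.1)]
      _ = L := (withDensity_apply _ measurableSet_Ioc).symm
  have hT : T < ‖k‖ ^ 2 := by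
    rw [hnormk]
    have h1 : (ENNReal.ofReal T).toReal < L.toReal :=
      (ENNReal.toReal_lt_toReal ENNReal.ofReal_ne_top hLlt.ne).mpr hbN
    rwa [ENNReal.toReal_ofReal (by positivity)] at h1
  rw [hT_def] at hT
  have hkpos : 0 < ‖k‖ := by nlinarith [norm_nonneg k, sq_nonneg (2 * ‖c‖ / ε)]
  set σ : ℂ := c / ((‖k‖ : ℂ) ^ 2) with hσ_def
  set f' : Lp ℂ 2 μ := fa - σ • k with hf'_def
  -- the restricted measure
  have hρ : volume.restrict (Set.Ioi b) = μ.restrict (Set.Ioi b) := by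
    rw [hμdef, Measure.restrict_restrict measurableSet_Ioi,
      Set.inter_eq_left.mpr (Set.Ioi_subset_Ioi hb0.le)]
  have hg2 : MemLp g 2 (volume.restrict (Set.Ioi b)) := by
    have h1 : MemLp (Set.indicator (Set.Ioi b) g) 2 (volume.restrict (Set.Ioi b)) := by
      rw [hρ]; exact (htrunc b hb0).restrict _
    refine h1.ae_eq ?_
    filter_upwards [ae_restrict_mem measurableSet_Ioi] with x hx
    exact Set.indicator_of_mem hx _
  have hint : ∀ φ : ℝ → ℂ, MemLp φ 2 (volume.restrict (Set.Ioi b)) →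
      Integrable (fun x => (starRingEnd ℂ) (g x) * φ x) (volume.restrict (Set.Ioi b)) := by
    intro φ hφ
    have hconj : MemLp (fun x => (starRingEnd ℂ) (g x)) 2 (volume.restrict (Set.Ioi b)) := by
      refine MemLp.of_le_mul (c := 1) hg2
        (RCLike.continuous_conj.comp_aestronglyMeasurable hg2.1) ?_
      exact Filter.Eventually.of_forall fun x => by simp
    have hsm := hφ.smul (r := 1) hconj
    have := memLp_one_iff_integrable.mp hsm
    exact this
  have hfa2 : MemLp (⇑fa) 2 (volume.restrict (Set.Ioi b)) := by
    rw [hρ]; exact (Lp.memLp fa).restrict _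
  have hk2 : MemLp (⇑k) 2 (volume.restrict (Set.Ioi b)) := by
    rw [hρ]; exact (Lp.memLp k).restrict _
  have hf'ae : ⇑f' =ᵐ[μ] fun x => fa x - σ * k x := by
    filter_upwards [Lp.coeFn_sub fa (σ • k), Lp.coeFn_smul σ k] with x h1 h2
    rw [hf'_def, h1, Pi.sub_apply, h2, Pi.smul_apply, smul_eq_mul]
  have hf'ρ : (⇑f') =ᵐ[volume.restrict (Set.Ioi b)] fun x => fa x - σ * k x := by
    rw [hρ]; exact ae_restrict_of_ae hf'ae
  have hfaρ : (⇑fa) =ᵐ[volume.restrict (Set.Ioi b)] Set.indicator (Set.Ioi a) ⇑f := by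
    rw [hρ]; exact ae_restrict_of_ae hfa
  have hkρ : (⇑k) =ᵐ[volume.restrict (Set.Ioi b)] Set.indicator (Set.Ioc b a) g := by
    rw [hρ]; exact ae_restrict_of_ae hkae
  have hA : ∫ x in Set.Ioi b, (starRingEnd ℂ) (g x) * fa x = c := by
    have e1 : ∫ x in Set.Ioi b, (starRingEnd ℂ) (g x) * fa x
        = ∫ x in Set.Ioi b,
            (Set.Ioi a).indicator (fun y => (starRingEnd ℂ) (g y) * fa y) x := by
      refine integral_congr_ae ?_
      filter_upwards [hfaρ] with x h1
      by_cases hx : x ∈ Set.Ioi a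
      · rw [Set.indicator_of_mem hx]
      · rw [Set.indicator_of_notMem hx, h1, Set.indicator_of_notMem hx, mul_zero]
    rw [e1, setIntegral_indicator measurableSet_Ioi, Set.Ioi_inter_Ioi,
      sup_eq_right.mpr hba.le]
  have hB : ∫ x in Set.Ioi b, (starRingEnd ℂ) (g x) * k x = ((L.toReal : ℝ) : ℂ) := by
    have e1 : ∫ x in Set.Ioi b, (starRingEnd ℂ) (g x) * k x
        = ∫ x in Set.Ioi b,
            (Set.Ioc b a).indicator (fun y => (starRingEnd ℂ) (g y) * g y) x := by
      refine integral_congr_ae ?_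
      filter_upwards [hkρ] with x h1
      rw [h1]
      by_cases hx : x ∈ Set.Ioc b a
      · rw [Set.indicator_of_mem hx, Set.indicator_of_mem hx]
      · rw [Set.indicator_of_notMem hx, Set.indicator_of_notMem hx, mul_zero]
    rw [e1, setIntegral_indicator measurableSet_Ioc,
      Set.inter_eq_right.mpr Set.Ioc_subset_Ioi_self]
    have e2 : ∫ x in Set.Ioc b a, (starRingEnd ℂ) (g x) * g x
        = ∫ x in Set.Ioc b a, ((‖g x‖ ^ 2 : ℝ) : ℂ) := by
      exact integral_congr_ae (Filter.Eventually.of_forall fun x => stmt13_conj_mul (g x))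
    rw [e2]
    have e2b : ∫ x in Set.Ioc b a, ((‖g x‖ ^ 2 : ℝ) : ℂ)
        = ((∫ x in Set.Ioc b a, ‖g x‖ ^ 2 : ℝ) : ℂ) := integral_ofReal
    rw [e2b]
    norm_cast
    have e3 := integral_toReal (μ := volume.restrict (Set.Ioc b a)) (f := Ggr)
      hGgrm.aemeasurable
      (Filter.Eventually.of_forall fun x => ENNReal.pow_lt_top ENNReal.coe_lt_top)
    have e4 : ∀ x : ℝ, (Ggr x).toReal = ‖g x‖ ^ 2 := fun x => by
      rw [hGgr_def]
      simp [ENNReal.toReal_pow]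
    calc ∫ x in Set.Ioc b a, ‖g x‖ ^ 2 = ∫ x in Set.Ioc b a, (Ggr x).toReal := by
          exact integral_congr_ae (Filter.Eventually.of_forall fun x => (e4 x).symm)
      _ = (∫⁻ x in Set.Ioc b a, Ggr x ∂volume).toReal := e3
      _ = L.toReal := by rw [hL_def, hν_def, withDensity_apply _ measurableSet_Ioc]
  have hInt1 := hint _ hfa2
  have hInt2 := hint _ hk2
  have hknez : ((‖k‖ : ℂ)) ≠ 0 := by exact_mod_cast hkpos.ne'
  have hmem2 : ∫ x in Set.Ioi b, (starRingEnd ℂ) (g x) * f' x = 0 := by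
    have e0 : ∫ x in Set.Ioi b, (starRingEnd ℂ) (g x) * f' x
        = ∫ x in Set.Ioi b,
            ((starRingEnd ℂ) (g x) * fa x - σ * ((starRingEnd ℂ) (g x) * k x)) := by
      refine integral_congr_ae ?_
      filter_upwards [hf'ρ] with x h1
      rw [h1]; ring
    rw [e0, integral_sub hInt1 (hInt2.const_mul σ), integral_const_mul, hA, hB,
      ← hnormk, hσ_def]
    push_cast
    field_simp
    ring
  have hmem1 : ∀ᵐ x ∂μ, x ∈ Set.Ioo 0 b → (f' : ℝ → ℂ) x = 0 := by
    filter_upwards [hf'ae, hfa, hkae] with x h1 h2 h3 hx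
    rw [h1, h2, h3,
      Set.indicator_of_notMem (by
        simp only [Set.mem_Ioi, not_lt]
        linarith [hx.2]),
      Set.indicator_of_notMem (by
        intro h
        exact absurd h.1 (not_lt.mpr hx.2.le))]
    ring
  have hdist2 : dist fa f' < ε / 2 := by
    have hsub : fa - f' = σ • k := by rw [hf'_def, _root_.sub_sub_cancel]
    rw [dist_eq_norm, hsub, norm_smul]
    have hσn : ‖σ‖ = ‖c‖ / ‖k‖ ^ 2 := by
      rw [hσ_def, norm_div, norm_pow, Complex.norm_real, Real.norm_eq_abs, abs_of_nonneg (norm_nonneg k)]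
    rw [hσn]
    have e5 : ‖c‖ / ‖k‖ ^ 2 * ‖k‖ = ‖c‖ / ‖k‖ := by
      field_simp
    rw [e5, div_lt_iff₀ hkpos]
    have hT' : (2 * ‖c‖) ^ 2 + ε ^ 2 < ε ^ 2 * ‖k‖ ^ 2 := by
      have h1 : ε ^ 2 * ((2 * ‖c‖ / ε) ^ 2 + 1) < ε ^ 2 * ‖k‖ ^ 2 :=
        mul_lt_mul_of_pos_left hT (by positivity)
      have h2 : ε ^ 2 * ((2 * ‖c‖ / ε) ^ 2 + 1) = (2 * ‖c‖) ^ 2 + ε ^ 2 := by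
        field_simp
      linarith
    have h2 : 2 * ‖c‖ < ε * ‖k‖ := by
      refine lt_of_pow_lt_pow_left₀ 2 (by positivity) ?_
      calc (2 * ‖c‖) ^ 2 < ε ^ 2 * ‖k‖ ^ 2 := by nlinarith [sq_nonneg ε]
        _ = (ε * ‖k‖) ^ 2 := by ring
    linarith
  refine ⟨f', Metric.mem_ball.mpr ?_, Set.mem_iUnion₂.mpr ⟨b, hb0, hmem1, hmem2⟩⟩
  have ht := dist_triangle f' fa f
  have hc1 : dist f' fa = dist fa f' := dist_comm _ _
  have hc2 : dist fa f = dist f fa := dist_comm _ _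
  linarith
end
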